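/- arXiv:math/9511202 — 3 statements merged into one kernel-verified Lean document; each statement's English description precedes it below -/
import Mathlib

section
/- For z, ζ, ξ in the closed unit ball of ℂ^n, the function (z,w) ↦ |1 - z·conj(w)|^{1/2} satisfies the triangle inequality: |1 - z·conj(ξ)|^{1/2} ≤ |1 - z·conj(ζ)|^{1/2} + |1 - ζ·conj(ξ)|^{1/2}. -/
open scoped InnerProductSpace

lemma projCS {E : Type*} [NormedAddCommGroup E] [InnerProductSpace ℂ E]
    (ξ z ζ : E) (hζ : ‖ζ‖ = 1) (hξ : ‖ξ‖ ≤ 1) (hz : ‖z‖ ≤ 1) :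
    ‖⟪ξ, z⟫_ℂ - ⟪ξ, ζ⟫_ℂ * ⟪ζ, z⟫_ℂ‖ ≤
      Real.sqrt (1 - ‖⟪ξ, ζ⟫_ℂ‖ ^ 2) * Real.sqrt (1 - ‖⟪ζ, z⟫_ℂ‖ ^ 2) := by
  set u := ξ - ⟪ζ, ξ⟫_ℂ • ζ with hu
  set v := z - ⟪ζ, z⟫_ℂ • ζ with hv
  have hζζ : ⟪ζ, ζ⟫_ℂ = 1 := by
    rw [inner_self_eq_norm_sq_to_K, hζ]; norm_num
  have key : ⟪u, v⟫_ℂ = ⟪ξ, z⟫_ℂ - ⟪ξ, ζ⟫_ℂ * ⟪ζ, z⟫_ℂ := by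
    simp [hu, hv, inner_sub_left, inner_sub_right, inner_smul_left, inner_smul_right, hζζ,
      inner_conj_symm, hζ]
    ring
  have habs : ∀ w : ℂ, (starRingEnd ℂ) w * w = ((‖w‖ : ℂ)) ^ 2 := by
    intro w
    rw [mul_comm, Complex.mul_conj, Complex.normSq_eq_norm_sq]
    push_cast; ring
  have habs2 : ∀ w : ℂ, w * (starRingEnd ℂ) w = ((‖w‖ : ℂ)) ^ 2 := by
    intro w
    rw [Complex.mul_conj, Complex.normSq_eq_norm_sq]
    push_cast; ring
  have hun : ‖u‖ ^ 2 = ‖ξ‖ ^ 2 - ‖⟪ξ, ζ⟫_ℂ‖ ^ 2 := by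
    have h1 : ⟪u, u⟫_ℂ = ⟪ξ, ξ⟫_ℂ - (‖⟪ξ, ζ⟫_ℂ‖ : ℂ) ^ 2 := by
      simp [hu, inner_sub_left, inner_sub_right, inner_smul_left, inner_smul_right, hζζ,
        inner_conj_symm, habs, -inner_self_eq_norm_sq_to_K]
      rw [← inner_conj_symm ζ ξ]
      exact habs _
    have h2 := congrArg Complex.re h1
    have h3 := inner_self_eq_norm_sq (𝕜 := ℂ) u
    have h4 := inner_self_eq_norm_sq (𝕜 := ℂ) ξ
    rw [RCLike.re_to_complex] at h3 h4
    rw [Complex.sub_re, h4] at h2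
    simpa [← Complex.ofReal_pow, h3] using h2
  have hvn : ‖v‖ ^ 2 = ‖z‖ ^ 2 - ‖⟪ζ, z⟫_ℂ‖ ^ 2 := by
    have h1 : ⟪v, v⟫_ℂ = ⟪z, z⟫_ℂ - (‖⟪ζ, z⟫_ℂ‖ : ℂ) ^ 2 := by
      simp [hv, inner_sub_left, inner_sub_right, inner_smul_left, inner_smul_right, hζζ,
        inner_conj_symm, habs, -inner_self_eq_norm_sq_to_K]
      rw [← inner_conj_symm ζ z, Complex.norm_conj]
      exact habs _
    have h2 := congrArg Complex.re h1
    have h3 := inner_self_eq_norm_sq (𝕜 := ℂ) v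
    have h4 := inner_self_eq_norm_sq (𝕜 := ℂ) z
    rw [RCLike.re_to_complex] at h3 h4
    rw [Complex.sub_re, h4] at h2
    simpa [← Complex.ofReal_pow, h3] using h2
  have cs : ‖⟪u, v⟫_ℂ‖ ≤ ‖u‖ * ‖v‖ := by
    simpa using norm_inner_le_norm (𝕜 := ℂ) u v
  rw [key] at cs
  refine cs.trans (mul_le_mul ?_ ?_ (norm_nonneg v) (Real.sqrt_nonneg _))
  · rw [show ‖u‖ = Real.sqrt (‖u‖ ^ 2) by rw [Real.sqrt_sq (norm_nonneg u)], hun]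
    exact Real.sqrt_le_sqrt (by nlinarith [norm_nonneg ξ])
  · rw [show ‖v‖ = Real.sqrt (‖v‖ ^ 2) by rw [Real.sqrt_sq (norm_nonneg v)], hvn]
    exact Real.sqrt_le_sqrt (by nlinarith [norm_nonneg z])

lemma projCS' {E : Type*} [NormedAddCommGroup E] [InnerProductSpace ℂ E]
    (ξ z ζ : E) (hζ : ‖ζ‖ ≤ 1) (hξ : ‖ξ‖ ≤ 1) (hz : ‖z‖ ≤ 1) :
    ‖⟪ξ, z⟫_ℂ - ⟪ξ, ζ⟫_ℂ * ⟪ζ, z⟫_ℂ‖ ≤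
      Real.sqrt (1 - ‖⟪ξ, ζ⟫_ℂ‖ ^ 2) * Real.sqrt (1 - ‖⟪ζ, z⟫_ℂ‖ ^ 2) := by
  set c : ℝ := Real.sqrt (1 - ‖ζ‖ ^ 2) with hc
  have hc2 : c ^ 2 = 1 - ‖ζ‖ ^ 2 := Real.sq_sqrt (by nlinarith [norm_nonneg ζ])
  set ζ' : WithLp 2 (E × ℂ) := (WithLp.equiv 2 (E × ℂ)).symm (ζ, (c : ℂ)) with hζ'
  set ξ' : WithLp 2 (E × ℂ) := (WithLp.equiv 2 (E × ℂ)).symm (ξ, 0) with hξ'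
  set z' : WithLp 2 (E × ℂ) := (WithLp.equiv 2 (E × ℂ)).symm (z, 0) with hz'
  have e1 : ⟪ξ', ζ'⟫_ℂ = ⟪ξ, ζ⟫_ℂ := by
    simp [WithLp.prod_inner_apply, hξ', hζ']
  have e2 : ⟪ζ', z'⟫_ℂ = ⟪ζ, z⟫_ℂ := by
    simp [WithLp.prod_inner_apply, hζ', hz']
  have e3 : ⟪ξ', z'⟫_ℂ = ⟪ξ, z⟫_ℂ := by
    simp [WithLp.prod_inner_apply, hξ', hz']
  have nζ' : ‖ζ'‖ = 1 := by
    have h : ‖ζ'‖ ^ 2 = 1 := by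
      rw [WithLp.prod_norm_sq_eq_of_L2]
      simp [hζ']
      linarith [hc2]
    calc ‖ζ'‖ = Real.sqrt (‖ζ'‖ ^ 2) := (Real.sqrt_sq (norm_nonneg _)).symm
    _ = 1 := by rw [h]; exact Real.sqrt_one
  have nξ' : ‖ξ'‖ ≤ 1 := by
    have h : ‖ξ'‖ ^ 2 = ‖ξ‖ ^ 2 := by
      rw [WithLp.prod_norm_sq_eq_of_L2]; simp [hξ']
    nlinarith [norm_nonneg ξ', norm_nonneg ξ]
  have nz' : ‖z'‖ ≤ 1 := by
    have h : ‖z'‖ ^ 2 = ‖z‖ ^ 2 := by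
      rw [WithLp.prod_norm_sq_eq_of_L2]; simp [hz']
    nlinarith [norm_nonneg z', norm_nonneg z]
  have := projCS ξ' z' ζ' nζ' nξ' nz'
  rwa [e1, e2, e3] at this

theorem stmt3 {n : ℕ} (z ζ ξ : EuclideanSpace ℂ (Fin n))
    (hz : ‖z‖ ≤ 1) (hζ : ‖ζ‖ ≤ 1) (hξ : ‖ξ‖ ≤ 1) :
    Real.sqrt (‖(1 - ⟪ξ, z⟫_ℂ)‖) ≤
      Real.sqrt (‖(1 - ⟪ζ, z⟫_ℂ)‖) + Real.sqrt (‖(1 - ⟪ξ, ζ⟫_ℂ)‖) := by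
  set a := ⟪ξ, ζ⟫_ℂ with hA
  set b := ⟪ζ, z⟫_ℂ with hB
  have ha : ‖a‖ ≤ 1 := by
    have := norm_inner_le_norm (𝕜 := ℂ) ξ ζ
    exact this.trans (by nlinarith [norm_nonneg ξ, norm_nonneg ζ])
  have hb : ‖b‖ ≤ 1 := by
    have := norm_inner_le_norm (𝕜 := ℂ) ζ z
    exact this.trans (by nlinarith [norm_nonneg ζ, norm_nonneg z])
  have hp := projCS' ξ z ζ hζ hξ hz
  set A := ‖1 - a‖ with hAA
  set B := ‖1 - b‖ with hBB
  have hA0 : 0 ≤ A := norm_nonneg _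
  have hB0 : 0 ≤ B := norm_nonneg _
  -- 1 - |a| ≤ A and 1 - |b| ≤ B
  have h1a : 1 - ‖a‖ ≤ A := by
    have := norm_sub_norm_le (1 : ℂ) a
    simpa using this
  have h1b : 1 - ‖b‖ ≤ B := by
    have := norm_sub_norm_le (1 : ℂ) b
    simpa using this
  -- √(1-|a|²) ≤ √(2A), similarly for b
  have hs1 : Real.sqrt (1 - ‖a‖ ^ 2) ≤ Real.sqrt (2 * A) :=
    Real.sqrt_le_sqrt (by nlinarith [norm_nonneg a])
  have hs2 : Real.sqrt (1 - ‖b‖ ^ 2) ≤ Real.sqrt (2 * B) :=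
    Real.sqrt_le_sqrt (by nlinarith [norm_nonneg b])
  have hcross : Real.sqrt (1 - ‖a‖ ^ 2) * Real.sqrt (1 - ‖b‖ ^ 2) ≤
      2 * Real.sqrt A * Real.sqrt B := by
    have := mul_le_mul hs1 hs2 (Real.sqrt_nonneg _) (Real.sqrt_nonneg _)
    refine this.trans (le_of_eq ?_)
    rw [Real.sqrt_mul (by norm_num) A, Real.sqrt_mul (by norm_num) B]
    have h2 : Real.sqrt 2 * Real.sqrt 2 = 2 := Real.mul_self_sqrt (by norm_num)
    ring_nf
    rw [Real.sq_sqrt (by norm_num : (0:ℝ) ≤ 2)]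
    ring
  have hmid : ‖1 - a * b‖ ≤ A + B := by
    have : (1 : ℂ) - a * b = (1 - a) + a * (1 - b) := by ring
    rw [this]
    refine (norm_add_le _ _).trans ?_
    rw [norm_mul]
    nlinarith [norm_nonneg (1 - b)]
  have hX : ‖1 - ⟪ξ, z⟫_ℂ‖ ≤ (Real.sqrt A + Real.sqrt B) ^ 2 := by
    have hdec : (1 : ℂ) - ⟪ξ, z⟫_ℂ = (1 - a * b) - (⟪ξ, z⟫_ℂ - a * b) := by ring
    calc ‖1 - ⟪ξ, z⟫_ℂ‖
        ≤ ‖1 - a * b‖ + ‖⟪ξ, z⟫_ℂ - a * b‖ := by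
          rw [hdec]; exact norm_sub_le _ _ |>.trans (le_of_eq rfl) |>.trans
            (by exact le_refl _) |>.trans (le_refl _) |>.trans (le_refl _)
      _ ≤ (A + B) + 2 * Real.sqrt A * Real.sqrt B := add_le_add hmid (hp.trans hcross)
      _ = (Real.sqrt A + Real.sqrt B) ^ 2 := by
          rw [add_pow_two, Real.sq_sqrt hA0, Real.sq_sqrt hB0]; ring
  calc Real.sqrt (‖1 - ⟪ξ, z⟫_ℂ‖)
      ≤ Real.sqrt ((Real.sqrt A + Real.sqrt B) ^ 2) := Real.sqrt_le_sqrt hX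
    _ = Real.sqrt A + Real.sqrt B := Real.sqrt_sq (by positivity)
    _ = Real.sqrt B + Real.sqrt A := by ring
end

section
/- Let ∞ ≥ p ≥ p' > 0, α > -1/p, α' > -1/p'. If α + 1/p < α' + 1/p', then B_α^p(B^n) ⊆ B_{α'}^{p'}(B^n), with a norm inequality ‖f‖_{p',α'} ≤ C‖f‖_{p,α}. -/
open MeasureTheory Metric Set
open scoped ENNReal InnerProductSpace

noncomputable instance (n : ℕ) : MeasurableSpace (EuclideanSpace ℂ (Fin n)) := borel _
instance (n : ℕ) : BorelSpace (EuclideanSpace ℂ (Fin n)) := ⟨rfl⟩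

/-- Lebesgue measure on `EuclideanSpace ℂ (Fin n)`, obtained from the product
Lebesgue measure on `Fin n → ℂ`. -/
noncomputable def volE (n : ℕ) : Measure (EuclideanSpace ℂ (Fin n)) :=
  Measure.map (⇑(EuclideanSpace.equiv (Fin n) ℂ).symm) volume

instance volE_haar (n : ℕ) : (volE n).IsAddHaarMeasure :=
  (EuclideanSpace.equiv (Fin n) ℂ).symm.isAddHaarMeasure_map volume

open Measure in
lemma lintegral_fun_norm_addHaar' {E : Type*} [NormedAddCommGroup E] [NormedSpace ℝ E]
    [MeasurableSpace E] [BorelSpace E] [Nontrivial E] [FiniteDimensional ℝ E]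
    (μ : Measure E) [μ.IsAddHaarMeasure] {F : ℝ → ℝ≥0∞} (hF : Measurable F) :
    ∫⁻ x, F ‖x‖ ∂μ
      = μ.toSphere Set.univ *
        ∫⁻ r in Set.Ioi (0:ℝ), ENNReal.ofReal (r ^ (Module.finrank ℝ E - 1)) * F r := by
  have h1 : ∫⁻ x, F ‖x‖ ∂μ = ∫⁻ x : ({0}ᶜ : Set E), F ‖(x : E)‖ ∂(μ.comap Subtype.val) := by
    rw [lintegral_subtype_comap (measurableSet_singleton (0:E)).compl (fun x => F ‖x‖),
      restrict_compl_singleton]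
  rw [h1]
  have h2 := (μ.measurePreserving_homeomorphUnitSphereProd).lintegral_comp
    (f := fun y : sphere (0:E) 1 × Set.Ioi (0:ℝ) => F (y.2 : ℝ))
    (hF.comp (measurable_subtype_coe.comp measurable_snd))
  have h3 : ∀ x : ({0}ᶜ : Set E),
      F ((((homeomorphUnitSphereProd E) x).2 : ℝ)) = F ‖(x : E)‖ := by
    intro x; rw [homeomorphUnitSphereProd_apply_snd_coe]
  calc ∫⁻ x : ({0}ᶜ : Set E), F ‖(x : E)‖ ∂(μ.comap Subtype.val)
      = ∫⁻ y : sphere (0:E) 1 × Set.Ioi (0:ℝ), F (y.2 : ℝ)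
          ∂(μ.toSphere.prod (volumeIoiPow (Module.finrank ℝ E - 1))) := by
        rw [← h2]; exact lintegral_congr fun x => (h3 x).symm
    _ = μ.toSphere Set.univ * ∫⁻ r : Set.Ioi (0:ℝ), F r
          ∂(volumeIoiPow (Module.finrank ℝ E - 1)) := by
        rw [MeasureTheory.lintegral_prod _
          ((show Measurable (fun y : sphere (0:E) 1 × Set.Ioi (0:ℝ) => F (y.2 : ℝ)) by
            fun_prop).aemeasurable)]
        simp [lintegral_const, mul_comm]
    _ = _ := by
        rw [volumeIoiPow, lintegral_withDensity_eq_lintegral_mul _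
          (f := fun r : Set.Ioi (0:ℝ) => ENNReal.ofReal ((r:ℝ) ^ (Module.finrank ℝ E - 1)))
          (by fun_prop)
          (g := fun r : Set.Ioi (0:ℝ) => F (r : ℝ)) (by fun_prop),
          ← lintegral_subtype_comap measurableSet_Ioi
            (fun r : ℝ => ENNReal.ofReal (r ^ (Module.finrank ℝ E - 1)) * F r)]
        rfl

lemma ennreal_weight_lt_top (n : ℕ) {β : ℝ} (hβ : -1 < β) :
    ∫⁻ z in ball (0 : EuclideanSpace ℂ (Fin n)) 1,
      ENNReal.ofReal ((1 - ‖z‖ ^ 2) ^ β) ∂(volE n) < ⊤ := by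
  rcases Nat.eq_zero_or_pos n with hn | hn
  · subst hn
    calc ∫⁻ z in ball (0 : EuclideanSpace ℂ (Fin 0)) 1,
          ENNReal.ofReal ((1 - ‖z‖ ^ 2) ^ β) ∂(volE 0)
        ≤ ∫⁻ _ in ball (0 : EuclideanSpace ℂ (Fin 0)) 1, 1 ∂(volE 0) := by
          refine setLIntegral_mono measurable_const fun z _ => ?_
          have hz : z = 0 := Subsingleton.elim z 0
          simp [hz, Real.one_rpow]
      _ = volE 0 (ball 0 1) := by simp
      _ < ⊤ := measure_ball_lt_top
  · haveI : Nonempty (Fin n) := ⟨⟨0, hn⟩⟩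
    haveI : Nontrivial (EuclideanSpace ℂ (Fin n)) := inferInstance
    set E := EuclideanSpace ℂ (Fin n)
    set m := Module.finrank ℝ E - 1 with hm
    set c : ℝ := max 1 (2 ^ β) with hc
    have hc1 : (1:ℝ) ≤ c := le_max_left _ _
    set F : ℝ → ℝ≥0∞ := fun r => if r < 1 then ENNReal.ofReal ((1 - r ^ 2) ^ β) else 0 with hF
    have hFm : Measurable F := by
      refine Measurable.ite (measurableSet_lt measurable_id measurable_const) ?_ measurable_const
      fun_prop
    have step1 : ∫⁻ z in ball (0 : E) 1, ENNReal.ofReal ((1 - ‖z‖ ^ 2) ^ β) ∂(volE n)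
        = ∫⁻ z in ball (0 : E) 1, F ‖z‖ ∂(volE n) := by
      refine setLIntegral_congr_fun measurableSet_ball (fun z hz => ?_)
      rw [mem_ball_zero_iff] at hz
      simp only [hF, if_pos hz]
    have step2 : ∫⁻ z in ball (0 : E) 1, F ‖z‖ ∂(volE n) ≤ ∫⁻ z, F ‖z‖ ∂(volE n) :=
      setLIntegral_le_lintegral _ _
    have step3 := lintegral_fun_norm_addHaar' (volE n) hFm
    -- bound the radial integral
    have hbound : ∀ r ∈ Ioi (0:ℝ), ENNReal.ofReal (r ^ m) * F r
        ≤ (Ioo (0:ℝ) 1).indicator (fun r => ENNReal.ofReal (c * (1 - r) ^ β)) r := by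
      intro r hr
      rw [mem_Ioi] at hr
      by_cases hr1 : r < 1
      · rw [indicator_of_mem (by exact ⟨hr, hr1⟩)]
        simp only [hF, if_pos hr1]
        have h1 : ENNReal.ofReal (r ^ m) ≤ 1 := by
          rw [ENNReal.ofReal_le_one]
          exact pow_le_one₀ hr.le hr1.le
        have h2 : (1 - r ^ 2) ^ β ≤ c * (1 - r) ^ β := by
          have hfac : (1:ℝ) - r ^ 2 = (1 - r) * (1 + r) := by ring
          have h1r : (0:ℝ) ≤ 1 - r := by linarith
          have h2r : (0:ℝ) ≤ 1 + r := by linarith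
          rw [hfac, Real.mul_rpow h1r h2r]
          have hle : (1 + r) ^ β ≤ c := by
            rcases le_or_gt 0 β with hb | hb
            · exact le_trans (Real.rpow_le_rpow h2r (by linarith) hb) (le_max_right _ _)
            · exact le_trans (Real.rpow_le_one_of_one_le_of_nonpos (by linarith) hb.le)
                (le_max_left _ _)
          calc (1 - r) ^ β * (1 + r) ^ β ≤ (1 - r) ^ β * c :=
                mul_le_mul_of_nonneg_left hle (Real.rpow_nonneg h1r β)
            _ = c * (1 - r) ^ β := mul_comm _ _
        calc ENNReal.ofReal (r ^ m) * ENNReal.ofReal ((1 - r ^ 2) ^ β)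
            ≤ 1 * ENNReal.ofReal (c * (1 - r) ^ β) :=
              mul_le_mul' h1 (ENNReal.ofReal_le_ofReal h2)
          _ = _ := one_mul _
      · simp only [hF, if_neg hr1, mul_zero]
        exact zero_le
    have step4 : ∫⁻ r in Ioi (0:ℝ), ENNReal.ofReal (r ^ m) * F r
        ≤ ∫⁻ r in Ioo (0:ℝ) 1, ENNReal.ofReal (c * (1 - r) ^ β) := by
      calc ∫⁻ r in Ioi (0:ℝ), ENNReal.ofReal (r ^ m) * F r
          ≤ ∫⁻ r in Ioi (0:ℝ),
              (Ioo (0:ℝ) 1).indicator (fun r => ENNReal.ofReal (c * (1 - r) ^ β)) r :=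
            setLIntegral_mono ((show Measurable (fun r : ℝ => ENNReal.ofReal (c * (1 - r) ^ β)) by fun_prop).indicator measurableSet_Ioo) hbound
        _ ≤ ∫⁻ r, (Ioo (0:ℝ) 1).indicator (fun r => ENNReal.ofReal (c * (1 - r) ^ β)) r :=
            setLIntegral_le_lintegral _ _
        _ = _ := lintegral_indicator measurableSet_Ioo _
    have step5 : ∫⁻ r in Ioo (0:ℝ) 1, ENNReal.ofReal (c * (1 - r) ^ β) < ⊤ := by
      have h1 : IntervalIntegrable (fun x : ℝ => x ^ β) volume 0 1 :=
        intervalIntegral.intervalIntegrable_rpow' hβ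
      have h2 : IntervalIntegrable (fun x : ℝ => (1 - x) ^ β) volume 0 1 := by
        have := (h1.comp_sub_left 1)
        simpa using this.symm
      have h3 : IntegrableOn (fun x : ℝ => (1 - x) ^ β) (Ioo 0 1) volume :=
        h2.1.mono_set Ioo_subset_Ioc_self
      exact (h3.const_mul c).lintegral_lt_top
    calc ∫⁻ z in ball (0 : E) 1, ENNReal.ofReal ((1 - ‖z‖ ^ 2) ^ β) ∂(volE n)
        ≤ ∫⁻ z, F ‖z‖ ∂(volE n) := step1 ▸ step2
      _ = (volE n).toSphere Set.univ * ∫⁻ r in Ioi (0:ℝ), ENNReal.ofReal (r ^ m) * F r := step3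
      _ < ⊤ := ENNReal.mul_lt_top (measure_lt_top _ _) (lt_of_le_of_lt step4 step5)

lemma ball_pos {n : ℕ} {z : EuclideanSpace ℂ (Fin n)} (hz : z ∈ ball (0 : EuclideanSpace ℂ (Fin n)) 1) :
    0 < 1 - ‖z‖ ^ 2 := by
  rw [mem_ball_zero_iff] at hz
  nlinarith [norm_nonneg z]


open scoped Classical in
noncomputable def projA {n : ℕ} (a z : EuclideanSpace ℂ (Fin n)) : EuclideanSpace ℂ (Fin n) :=
  if a = 0 then 0 else ((⟪a, z⟫_ℂ) / (⟪a, a⟫_ℂ)) • a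

/-- The Möbius involution `φ_a` of the unit ball exchanging `0` and `a` (Rudin 2.2.2). -/
noncomputable def mobius {n : ℕ} (a z : EuclideanSpace ℂ (Fin n)) : EuclideanSpace ℂ (Fin n) :=
  ((1 : ℂ) - ⟪a, z⟫_ℂ)⁻¹ •
    ((a - projA a z) - ((Real.sqrt (1 - ‖a‖ ^ 2) : ℝ) : ℂ) • (z - projA a z))

open scoped Classical in
/-- The norm of `f` in the weighted Bergman space `B_α^p(B^n)`; for `p = ∞` this is
`sup_z (1-|z|²)^α |f z|`. Valued in `ℝ≥0∞`. -/
noncomputable def wNorm (n : ℕ) (p : ℝ≥0∞) (α : ℝ)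
    (f : EuclideanSpace ℂ (Fin n) → ℂ) : ℝ≥0∞ :=
  if p = ⊤ then
    ⨆ z ∈ Metric.ball (0 : EuclideanSpace ℂ (Fin n)) 1,
      ENNReal.ofReal ((1 - ‖z‖ ^ 2) ^ α * ‖f z‖)
  else
    (∫⁻ z in Metric.ball (0 : EuclideanSpace ℂ (Fin n)) 1,
      ENNReal.ofReal ((1 - ‖z‖ ^ 2) ^ (α * p.toReal) * ‖f z‖ ^ p.toReal)
        ∂(volE n)) ^ (1 / p.toReal)

theorem stmt9 (n : ℕ) (p p' : ℝ≥0∞) (α α' : ℝ) (hp' : 0 < p') (hpp' : p' ≤ p)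
    (hα : -1/p.toReal < α) (hα' : -1/p'.toReal < α')
    (h : α + 1/p.toReal < α' + 1/p'.toReal) :
    ∃ C : ℝ≥0∞, 0 < C ∧ C < ⊤ ∧
      ∀ f : EuclideanSpace ℂ (Fin n) → ℂ,
        DifferentiableOn ℂ f (Metric.ball (0 : EuclideanSpace ℂ (Fin n)) 1) →
        wNorm n p' α' f ≤ C * wNorm n p α f := by
  by_cases hp'top : p' = ⊤
  · -- then p = ⊤
    have hptop : p = ⊤ := top_le_iff.mp (hp'top ▸ hpp')
    subst hptop hp'top
    have hαα' : α < α' := by simpa using h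
    refine ⟨1, one_pos, ENNReal.one_lt_top, fun f _ => ?_⟩
    rw [one_mul, wNorm, wNorm, if_pos rfl, if_pos rfl]
    refine iSup_mono fun z => iSup_mono' fun hz => ⟨hz, ?_⟩
    refine ENNReal.ofReal_le_ofReal ?_
    have ht := ball_pos hz
    have ht1 : 1 - ‖z‖ ^ 2 ≤ 1 := by nlinarith [norm_nonneg z]
    exact mul_le_mul_of_nonneg_right
      (Real.rpow_le_rpow_of_exponent_ge ht ht1 hαα'.le) (norm_nonneg _)
  · have hQ : 0 < p'.toReal := ENNReal.toReal_pos hp'.ne' hp'top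
    set Q := p'.toReal with hQdef
    by_cases hptop : p = ⊤
    · -- p = ⊤, p' < ⊤
      have hαα' : α < α' + 1/Q := by
        have : p.toReal = 0 := by simp [hptop]
        rw [this] at h; simpa using h
      have hβ : -1 < (α' - α) * Q := by
        have h1 : (α' + 1/Q - α) * Q = (α' - α) * Q + 1 := by field_simp; ring
        have h2 : 0 < (α' + 1/Q - α) * Q := mul_pos (by linarith) hQ
        linarith
      set K := ∫⁻ z in ball (0 : EuclideanSpace ℂ (Fin n)) 1,
        ENNReal.ofReal ((1 - ‖z‖ ^ 2) ^ ((α' - α) * Q)) ∂(volE n) with hKdef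
      have hK : K < ⊤ := ennreal_weight_lt_top n hβ
      refine ⟨K ^ (1/Q) + 1, lt_of_lt_of_le zero_lt_one le_add_self, ?_, fun f _ => ?_⟩
      · exact ENNReal.add_lt_top.mpr ⟨ENNReal.rpow_lt_top_of_nonneg (by positivity) hK.ne,
          ENNReal.one_lt_top⟩
      · set M := wNorm n p α f with hMdef
        have hMtop : wNorm n p α f =
            ⨆ z ∈ ball (0 : EuclideanSpace ℂ (Fin n)) 1,
              ENNReal.ofReal ((1 - ‖z‖ ^ 2) ^ α * ‖f z‖) := by
          rw [wNorm, if_pos hptop]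
        have hbound : ∀ z ∈ ball (0 : EuclideanSpace ℂ (Fin n)) 1,
            ENNReal.ofReal ((1 - ‖z‖ ^ 2) ^ (α' * Q) * ‖f z‖ ^ Q)
              ≤ M ^ Q * ENNReal.ofReal ((1 - ‖z‖ ^ 2) ^ ((α' - α) * Q)) := by
          intro z hz
          have ht := ball_pos hz
          set t := 1 - ‖z‖ ^ 2
          set a := ‖f z‖
          have ha : 0 ≤ a := norm_nonneg _
          have hkey : t ^ (α' * Q) = t ^ (α * Q) * t ^ ((α' - α) * Q) := by
            rw [← Real.rpow_add ht]; congr 1; ring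
          have e1 : t ^ (α' * Q) * a ^ Q = (t ^ α * a) ^ Q * t ^ ((α' - α) * Q) := by
            rw [Real.mul_rpow (Real.rpow_nonneg ht.le α) ha, ← Real.rpow_mul ht.le, hkey]; ring
          calc ENNReal.ofReal (t ^ (α' * Q) * a ^ Q)
              = ENNReal.ofReal (t ^ α * a) ^ Q * ENNReal.ofReal (t ^ ((α' - α) * Q)) := by
                rw [e1, ENNReal.ofReal_mul (by positivity),
                  ← ENNReal.ofReal_rpow_of_nonneg (by positivity) hQ.le]
            _ ≤ M ^ Q * ENNReal.ofReal (t ^ ((α' - α) * Q)) := by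
                refine mul_le_mul_left (ENNReal.rpow_le_rpow ?_ hQ.le) _
                rw [hMdef, hMtop]
                exact le_biSup (fun z : EuclideanSpace ℂ (Fin n) => ENNReal.ofReal ((1 - ‖z‖ ^ 2) ^ α * ‖f z‖)) hz
        have hGm : Measurable fun z : EuclideanSpace ℂ (Fin n) =>
            ENNReal.ofReal ((1 - ‖z‖ ^ 2) ^ ((α' - α) * Q)) := by fun_prop
        calc wNorm n p' α' f
            = (∫⁻ z in ball (0 : EuclideanSpace ℂ (Fin n)) 1,
                ENNReal.ofReal ((1 - ‖z‖ ^ 2) ^ (α' * Q) * ‖f z‖ ^ Q)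
                  ∂(volE n)) ^ (1/Q) := by rw [wNorm, if_neg hp'top]
          _ ≤ (∫⁻ z in ball (0 : EuclideanSpace ℂ (Fin n)) 1,
                M ^ Q * ENNReal.ofReal ((1 - ‖z‖ ^ 2) ^ ((α' - α) * Q))
                  ∂(volE n)) ^ (1/Q) := by
              refine ENNReal.rpow_le_rpow ?_ (by positivity)
              refine lintegral_mono_ae ?_
              filter_upwards [ae_restrict_mem measurableSet_ball] with z hz
              exact hbound z hz
          _ = (M ^ Q * K) ^ (1/Q) := by rw [lintegral_const_mul _ hGm, hKdef]
          _ = M * K ^ (1/Q) := by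
              rw [ENNReal.mul_rpow_of_nonneg _ _ (by positivity), ← ENNReal.rpow_mul,
                mul_one_div, div_self hQ.ne', ENNReal.rpow_one]
          _ ≤ (K ^ (1/Q) + 1) * M := by
              rw [mul_comm]
              exact mul_le_mul_left le_self_add _
    · -- p, p' both finite
      set P := p.toReal with hPdef
      have hP : 0 < P := ENNReal.toReal_pos (lt_of_lt_of_le hp' hpp').ne' hptop
      have hQP : Q ≤ P := (ENNReal.toReal_le_toReal hp'top hptop).mpr hpp'
      by_cases hQP' : Q = P
      · refine ⟨1, one_pos, ENNReal.one_lt_top, fun f hf => ?_⟩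
        have hαα' : α < α' := by rw [← hQP'] at h; linarith
        rw [one_mul, wNorm, wNorm, if_neg hp'top, if_neg hptop, ← hPdef, ← hQdef, ← hQP']
        refine ENNReal.rpow_le_rpow ?_ (by positivity)
        refine lintegral_mono_ae ?_
        filter_upwards [ae_restrict_mem measurableSet_ball] with z hz
        have ht := ball_pos hz
        have ht1 : 1 - ‖z‖ ^ 2 ≤ 1 := by nlinarith [norm_nonneg z]
        refine ENNReal.ofReal_le_ofReal ?_
        refine mul_le_mul_of_nonneg_right
          (Real.rpow_le_rpow_of_exponent_ge ht ht1 (by nlinarith)) ?_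
        exact Real.rpow_nonneg (norm_nonneg _) _
      · have hQP2 : Q < P := lt_of_le_of_ne hQP hQP'
        have hd : 0 < P - Q := sub_pos.mpr hQP2
        have hrr : (0:ℝ) < P/Q := by positivity
        have hss : (0:ℝ) < P/(P-Q) := by positivity
        have hrs : Real.HolderConjugate (P/Q) (P/(P-Q)) := by
          rw [Real.holderConjugate_iff]
          constructor
          · exact (one_lt_div hQ).mpr hQP2
          · rw [inv_div, inv_div]
            field_simp
            ring
        have hβ' : -1 < (α' - α) * Q * (P/(P-Q)) := by
          have e2 : 1/P - 1/Q < α' - α := by linarith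
          have e3 : (1/P - 1/Q) * (P*Q) = -(P-Q) := by field_simp; ring
          have e4 := mul_lt_mul_of_pos_right e2 (mul_pos hP hQ)
          rw [e3] at e4
          have e5 : (α' - α) * Q * (P/(P-Q)) = ((α' - α) * (P*Q))/(P-Q) := by
            field_simp
          rw [e5, lt_div_iff₀ hd]
          linarith
        set K := ∫⁻ z in ball (0 : EuclideanSpace ℂ (Fin n)) 1,
          ENNReal.ofReal ((1 - ‖z‖ ^ 2) ^ ((α' - α) * Q * (P/(P-Q)))) ∂(volE n) with hKdef
        have hK : K < ⊤ := ennreal_weight_lt_top n hβ'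
        refine ⟨K ^ ((1/(P/(P-Q)))*(1/Q)) + 1, lt_of_lt_of_le zero_lt_one le_add_self, ?_,
          fun f hf => ?_⟩
        · exact ENNReal.add_lt_top.mpr ⟨ENNReal.rpow_lt_top_of_nonneg (by positivity) hK.ne,
            ENNReal.one_lt_top⟩
        · have hfae : AEMeasurable f ((volE n).restrict (ball (0:EuclideanSpace ℂ (Fin n)) 1)) :=
            (hf.continuousOn).aemeasurable measurableSet_ball
          have habs : AEMeasurable (fun z => ‖f z‖)
              ((volE n).restrict (ball (0:EuclideanSpace ℂ (Fin n)) 1)) :=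
            continuous_norm.measurable.comp_aemeasurable hfae
          set F : EuclideanSpace ℂ (Fin n) → ℝ≥0∞ := fun z =>
            ENNReal.ofReal ((1 - ‖z‖ ^ 2) ^ (α * Q) * ‖f z‖ ^ Q) with hFdef
          set G : EuclideanSpace ℂ (Fin n) → ℝ≥0∞ := fun z =>
            ENNReal.ofReal ((1 - ‖z‖ ^ 2) ^ ((α' - α) * Q)) with hGdef
          have hFae : AEMeasurable F ((volE n).restrict (ball (0:EuclideanSpace ℂ (Fin n)) 1)) := by
            apply ENNReal.measurable_ofReal.comp_aemeasurable
            refine AEMeasurable.mul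
              ((show Measurable fun z : EuclideanSpace ℂ (Fin n) =>
                (1 - ‖z‖ ^ 2) ^ (α * Q) by fun_prop).aemeasurable) ?_
            exact (show Measurable fun x : ℝ => x ^ Q by fun_prop).comp_aemeasurable habs
          have hGm : Measurable G := by rw [hGdef]; fun_prop
          have hHolder := ENNReal.lintegral_mul_le_Lp_mul_Lq
            ((volE n).restrict (ball (0:EuclideanSpace ℂ (Fin n)) 1)) hrs hFae hGm.aemeasurable
          have eqL : ∫⁻ z in ball (0:EuclideanSpace ℂ (Fin n)) 1,
              ENNReal.ofReal ((1 - ‖z‖ ^ 2) ^ (α' * Q) * ‖f z‖ ^ Q) ∂(volE n)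
              = ∫⁻ z in ball (0:EuclideanSpace ℂ (Fin n)) 1, (F * G) z ∂(volE n) := by
            refine lintegral_congr_ae ?_
            filter_upwards [ae_restrict_mem measurableSet_ball] with z hz
            have ht := ball_pos hz
            have ha : (0:ℝ) ≤ ‖f z‖ := norm_nonneg _
            have hkey : (1 - ‖z‖ ^ 2) ^ (α' * Q)
                = (1 - ‖z‖ ^ 2) ^ (α * Q) * (1 - ‖z‖ ^ 2) ^ ((α' - α) * Q) := by
              rw [← Real.rpow_add ht]; congr 1; ring
            simp only [hFdef, hGdef, Pi.mul_apply]
            rw [← ENNReal.ofReal_mul (mul_nonneg (Real.rpow_nonneg ht.le _)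
              (Real.rpow_nonneg ha _)), hkey]
            congr 1; ring
          have eqF : ∫⁻ z in ball (0:EuclideanSpace ℂ (Fin n)) 1, F z ^ (P/Q) ∂(volE n)
              = ∫⁻ z in ball (0:EuclideanSpace ℂ (Fin n)) 1,
                  ENNReal.ofReal ((1 - ‖z‖ ^ 2) ^ (α * P) * ‖f z‖ ^ P) ∂(volE n) := by
            refine lintegral_congr_ae ?_
            filter_upwards [ae_restrict_mem measurableSet_ball] with z hz
            have ht := ball_pos hz
            have ha : (0:ℝ) ≤ ‖f z‖ := norm_nonneg _
            have hQr : Q * (P/Q) = P := by field_simp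
            have hαQr : α * Q * (P/Q) = α * P := by rw [mul_assoc, hQr]
            simp only [hFdef]
            rw [ENNReal.ofReal_rpow_of_nonneg (mul_nonneg (Real.rpow_nonneg ht.le _)
              (Real.rpow_nonneg ha _)) hrr.le,
              Real.mul_rpow (Real.rpow_nonneg ht.le _) (Real.rpow_nonneg ha _),
              ← Real.rpow_mul ht.le, ← Real.rpow_mul ha, hαQr, hQr]
          have eqG : ∫⁻ z in ball (0:EuclideanSpace ℂ (Fin n)) 1, G z ^ (P/(P-Q)) ∂(volE n)
              = K := by
            rw [hKdef]
            refine lintegral_congr_ae ?_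
            filter_upwards [ae_restrict_mem measurableSet_ball] with z hz
            have ht := ball_pos hz
            simp only [hGdef]
            rw [ENNReal.ofReal_rpow_of_nonneg (Real.rpow_nonneg ht.le _) hss.le,
              ← Real.rpow_mul ht.le]
          have hfrac : (1/(P/Q))*(1/Q) = 1/P := by
            rw [one_div_div]
            field_simp
          calc wNorm n p' α' f
              = (∫⁻ z in ball (0:EuclideanSpace ℂ (Fin n)) 1,
                  ENNReal.ofReal ((1 - ‖z‖ ^ 2) ^ (α' * Q) * ‖f z‖ ^ Q)
                    ∂(volE n)) ^ (1/Q) := by rw [wNorm, if_neg hp'top]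
            _ ≤ ((∫⁻ z in ball (0:EuclideanSpace ℂ (Fin n)) 1,
                    ENNReal.ofReal ((1 - ‖z‖ ^ 2) ^ (α * P) * ‖f z‖ ^ P)
                      ∂(volE n)) ^ (1/(P/Q)) * K ^ (1/(P/(P-Q)))) ^ (1/Q) := by
                rw [eqL, ← eqF, ← eqG]
                exact ENNReal.rpow_le_rpow hHolder (by positivity)
            _ = (∫⁻ z in ball (0:EuclideanSpace ℂ (Fin n)) 1,
                    ENNReal.ofReal ((1 - ‖z‖ ^ 2) ^ (α * P) * ‖f z‖ ^ P)
                      ∂(volE n)) ^ (1/P) * K ^ ((1/(P/(P-Q)))*(1/Q)) := by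
                rw [ENNReal.mul_rpow_of_nonneg _ _ (by positivity), ← ENNReal.rpow_mul,
                  ← ENNReal.rpow_mul, hfrac]
            _ = K ^ ((1/(P/(P-Q)))*(1/Q)) * wNorm n p α f := by
                rw [wNorm, if_neg hptop, ← hPdef, mul_comm]
            _ ≤ (K ^ ((1/(P/(P-Q)))*(1/Q)) + 1) * wNorm n p α f :=
                mul_le_mul_left le_self_add _
end

section
/- (Mills' Lemma) Let A_{jk}, j,k ∈ ℤ_+, be nonnegative reals with A_{jk} = A_{kj} and A_{jj} = 0 for all j,k. If sup_k ∑_j A_{jk} = M < ∞, then there is a partition ℤ_+ = S₁ ∪ S₂ with S₁ ∩ S₂ = ∅ such that sup_{k∈S_i} ∑_{j∈S_i} A_{jk} ≤ M/2 for i = 1, 2. -/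
open scoped ENNReal
open Finset
open scoped NNReal

open Finset

noncomputable def Qen (A : ℕ → ℕ → ℝ) (u : Finset ℕ) : ℝ := ∑ j ∈ u, ∑ l ∈ u, A j l

lemma Qen_insert (A : ℕ → ℕ → ℝ) (hsym : ∀ j k, A j k = A k j) (hdiag : ∀ j, A j j = 0)
    {u : Finset ℕ} {k : ℕ} (hk : k ∉ u) :
    Qen A (insert k u) = Qen A u + 2 * ∑ j ∈ u, A j k := by
  unfold Qen
  rw [Finset.sum_insert hk]
  simp only [Finset.sum_insert hk, hdiag k, Finset.sum_add_distrib]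
  have : ∑ l ∈ u, A k l = ∑ l ∈ u, A l k := Finset.sum_congr rfl (fun l _ => hsym k l)
  rw [this]
  ring

lemma exists_minimizer (A : ℕ → ℕ → ℝ) (n : ℕ) :
    ∃ s ∈ (range n).powerset, ∀ t ∈ (range n).powerset,
      Qen A s + Qen A (range n \ s) ≤ Qen A t + Qen A (range n \ t) :=
  Finset.exists_min_image ((range n).powerset) (fun s => Qen A s + Qen A (range n \ s))
    ⟨∅, by simp⟩

lemma minimizer_local (A : ℕ → ℕ → ℝ) (hsym : ∀ j k, A j k = A k j) (hdiag : ∀ j, A j j = 0)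
    {n : ℕ} {s : Finset ℕ} (hs : s ⊆ range n)
    (hmin : ∀ t ∈ (range n).powerset, Qen A s + Qen A (range n \ s) ≤ Qen A t + Qen A (range n \ t))
    (k : ℕ) :
    (k ∈ s → ∑ j ∈ s, A j k ≤ ∑ j ∈ range n \ s, A j k) ∧
    (k ∈ range n \ s → ∑ j ∈ range n \ s, A j k ≤ ∑ j ∈ s, A j k) := by
  constructor
  · intro hk
    have hkr : k ∈ range n := hs hk
    have h1 : s = insert k (s.erase k) := (Finset.insert_erase hk).symm
    have hk1 : k ∉ s.erase k := Finset.notMem_erase k s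
    have hc : range n \ (s.erase k) = insert k (range n \ s) := by
      ext j
      by_cases hj : j = k <;> simp [hj, hkr, hk, Finset.mem_sdiff, Finset.mem_erase]
    have hk2 : k ∉ range n \ s := by simp [hk]
    have hmem : s.erase k ∈ (range n).powerset := by
      rw [Finset.mem_powerset]; exact (Finset.erase_subset k s).trans hs
    have hQ : Qen A s = Qen A (s.erase k) + 2 * ∑ j ∈ s.erase k, A j k := by
      conv_lhs => rw [h1]
      exact Qen_insert A hsym hdiag hk1
    have := hmin _ hmem
    rw [hc, Qen_insert A hsym hdiag hk2, hQ] at this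
    have key : ∑ j ∈ s.erase k, A j k ≤ ∑ j ∈ range n \ s, A j k := by linarith
    calc ∑ j ∈ s, A j k = ∑ j ∈ insert k (s.erase k), A j k := by rw [← h1]
      _ = A k k + ∑ j ∈ s.erase k, A j k := Finset.sum_insert hk1
      _ ≤ ∑ j ∈ range n \ s, A j k := by rw [hdiag]; linarith
  · intro hk
    have hkr : k ∈ range n := (Finset.mem_sdiff.mp hk).1
    have hks : k ∉ s := (Finset.mem_sdiff.mp hk).2
    have hc : range n \ (insert k s) = (range n \ s).erase k := by
      ext j
      by_cases hj : j = k <;> simp [hj, hkr, hks, Finset.mem_sdiff, Finset.mem_erase]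
    have hk1 : k ∉ (range n \ s).erase k := Finset.notMem_erase _ _
    have h1 : range n \ s = insert k ((range n \ s).erase k) := (Finset.insert_erase hk).symm
    have hmem : insert k s ∈ (range n).powerset := by
      rw [Finset.mem_powerset]; exact Finset.insert_subset hkr hs
    have hQ : Qen A (range n \ s) = Qen A ((range n \ s).erase k) + 2 * ∑ j ∈ (range n \ s).erase k, A j k := by
      conv_lhs => rw [h1]
      exact Qen_insert A hsym hdiag hk1
    have := hmin _ hmem
    rw [hc, Qen_insert A hsym hdiag hks, hQ] at this
    have key : ∑ j ∈ (range n \ s).erase k, A j k ≤ ∑ j ∈ s, A j k := by linarith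
    calc ∑ j ∈ range n \ s, A j k = ∑ j ∈ insert k ((range n \ s).erase k), A j k := by rw [← h1]
      _ = A k k + ∑ j ∈ (range n \ s).erase k, A j k := Finset.sum_insert hk1
      _ ≤ ∑ j ∈ s, A j k := by rw [hdiag]; linarith


lemma half_bound (A : ℕ → ℕ → ℝ) (hnn : ∀ j k, 0 ≤ A j k) (k : ℕ)
    (htot : (∑' j, ENNReal.ofReal (A j k)) ≠ ⊤)
    (P : ℕ → Prop) (t : ℕ → Finset ℕ)
    (hP : ∀ N, ∃ n, N < n ∧ (∀ j ≤ N, (j ∈ t n ↔ P j)) ∧ t n ⊆ Finset.range n ∧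
      (k ∈ t n → ∑ j ∈ t n, A j k ≤ ∑ j ∈ Finset.range n \ t n, A j k))
    (hk : P k) :
    (∑' j : {j // P j}, ENNReal.ofReal (A (j : ℕ) k))
      ≤ ∑' j : {j // ¬ P j}, ENNReal.ofReal (A (j : ℕ) k) := by
  classical
  set g : ℕ → ℝ≥0∞ := fun j => ENNReal.ofReal (A j k) with hg
  have lhs_eq : (∑' j : {j // P j}, g (j : ℕ)) = ∑' j, Set.indicator {j | P j} g j :=
    tsum_subtype {j | P j} g
  have rhs_eq : (∑' j : {j // ¬ P j}, g (j : ℕ)) = ∑' j, Set.indicator {j | ¬ P j} g j :=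
    tsum_subtype {j | ¬ P j} g
  rw [lhs_eq, rhs_eq]
  have hrhs_ne : (∑' j, Set.indicator {j | ¬ P j} g j) ≠ ⊤ := by
    refine ne_top_of_le_ne_top htot (Summable.tsum_le_tsum (fun j => ?_) ENNReal.summable ENNReal.summable)
    exact Set.indicator_le_self _ _ j
  rw [ENNReal.tsum_eq_iSup_sum]
  refine iSup_le fun F => ?_
  refine ENNReal.le_of_forall_pos_le_add fun ε hε hfin => ?_
  -- tail bound
  have htail : ∀ᶠ m in Filter.atTop, (∑' i, g (i + m)) < (ε : ℝ≥0∞) := by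
    have h0 : (0 : ℝ≥0∞) < ε := by exact_mod_cast hε
    exact (ENNReal.tendsto_sum_nat_add g htot).eventually_lt_const h0
  obtain ⟨N₀, hN₀⟩ := htail.exists_forall_of_atTop
  set N : ℕ := max (max (F.sup id) k) N₀ with hN
  obtain ⟨n, hnN, hagree, hsub, hmin⟩ := hP N
  have hkN : k ≤ N := le_trans (le_max_right _ _) (le_max_left _ _)
  have hkt : k ∈ t n := (hagree k hkN).mpr hk
  have hmin' := hmin hkt
  -- real chain
  have hFsub : F.filter P ⊆ t n := by
    intro j hj
    rw [Finset.mem_filter] at hj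
    have hjN : j ≤ N := le_trans (le_trans (Finset.le_sup (f := id) hj.1) (le_max_left _ _)) (le_max_left _ _)
    exact (hagree j hjN).mpr hj.2
  have step1 : ∑ j ∈ F.filter P, A j k ≤ ∑ j ∈ t n, A j k :=
    Finset.sum_le_sum_of_subset_of_nonneg hFsub (fun j _ _ => hnn j k)
  have hsplit : Finset.range n \ t n ⊆ (Finset.range (N+1) \ t n) ∪ Finset.Ico (N+1) n := by
    intro j hj
    rw [Finset.mem_sdiff, Finset.mem_range] at hj
    rcases lt_or_ge j (N+1) with h | h
    · exact Finset.mem_union_left _ (Finset.mem_sdiff.mpr ⟨Finset.mem_range.mpr h, hj.2⟩)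
    · exact Finset.mem_union_right _ (Finset.mem_Ico.mpr ⟨h, hj.1⟩)
  have hdisj : Disjoint (Finset.range (N+1) \ t n) (Finset.Ico (N+1) n) := by
    refine Finset.disjoint_left.mpr fun j hj hj' => ?_
    rw [Finset.mem_sdiff, Finset.mem_range] at hj
    rw [Finset.mem_Ico] at hj'
    omega
  have step2 : ∑ j ∈ Finset.range n \ t n, A j k ≤
      ∑ j ∈ Finset.range (N+1) \ t n, A j k + ∑ j ∈ Finset.Ico (N+1) n, A j k := by
    rw [← Finset.sum_union hdisj]
    exact Finset.sum_le_sum_of_subset_of_nonneg hsplit (fun j _ _ => hnn j k)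
  -- back to ENNReal
  have ind_eq : ∀ (Q : ℕ → Prop) (_ : DecidablePred Q) (G : Finset ℕ),
      ∑ j ∈ G.filter Q, g j = ∑ j ∈ G, Set.indicator {j | Q j} g j := by
    intro Q _ G
    rw [Finset.sum_filter]
    exact Finset.sum_congr rfl fun j _ => by
      by_cases h : Q j <;> simp [h, Set.indicator_apply, Set.mem_setOf_eq]
  have hLHS : ∑ j ∈ F, Set.indicator {j | P j} g j = ENNReal.ofReal (∑ j ∈ F.filter P, A j k) := by
    rw [ENNReal.ofReal_sum_of_nonneg (fun j _ => hnn j k), ← ind_eq P inferInstance F]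
  have hreal : ∑ j ∈ F.filter P, A j k ≤
      ∑ j ∈ Finset.range (N+1) \ t n, A j k + ∑ j ∈ Finset.Ico (N+1) n, A j k :=
    le_trans step1 (le_trans hmin' step2)
  have hb1 : ENNReal.ofReal (∑ j ∈ Finset.range (N+1) \ t n, A j k) ≤
      ∑' j, Set.indicator {j | ¬ P j} g j := by
    have heq : Finset.range (N+1) \ t n = (Finset.range (N+1)).filter (fun j => ¬ P j) := by
      ext j
      simp only [Finset.mem_sdiff, Finset.mem_filter, Finset.mem_range]
      constructor
      · rintro ⟨h1, h2⟩; exact ⟨h1, fun hp => h2 ((hagree j (Nat.lt_succ_iff.mp h1)).mpr hp)⟩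
      · rintro ⟨h1, h2⟩; exact ⟨h1, fun ht => h2 ((hagree j (Nat.lt_succ_iff.mp h1)).mp ht)⟩
    calc ENNReal.ofReal (∑ j ∈ Finset.range (N+1) \ t n, A j k)
        = ∑ j ∈ Finset.range (N+1) \ t n, g j :=
          ENNReal.ofReal_sum_of_nonneg (fun j _ => hnn j k)
      _ = ∑ j ∈ (Finset.range (N+1)).filter (fun j => ¬ P j), g j := by rw [heq]
      _ = ∑ j ∈ Finset.range (N+1), Set.indicator {j | ¬ P j} g j := ind_eq _ inferInstance _
      _ ≤ ∑' j, Set.indicator {j | ¬ P j} g j := ENNReal.sum_le_tsum _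
  have hb2 : ENNReal.ofReal (∑ j ∈ Finset.Ico (N+1) n, A j k) ≤ (ε : ℝ≥0∞) := by
    rw [ENNReal.ofReal_sum_of_nonneg (fun j _ => hnn j k)]
    have : ∑ j ∈ Finset.Ico (N+1) n, g j = ∑ i ∈ Finset.range (n - (N+1)), g (i + (N+1)) := by
      rw [Finset.sum_Ico_eq_sum_range]
      exact Finset.sum_congr rfl fun i _ => by rw [add_comm]
    calc ∑ j ∈ Finset.Ico (N+1) n, g j = ∑ i ∈ Finset.range (n - (N+1)), g (i + (N+1)) := this
      _ ≤ ∑' i, g (i + (N+1)) := ENNReal.sum_le_tsum _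
      _ ≤ (ε : ℝ≥0∞) := (hN₀ (N+1) (by omega)).le
  calc ∑ j ∈ F, Set.indicator {j | P j} g j
      = ENNReal.ofReal (∑ j ∈ F.filter P, A j k) := hLHS
    _ ≤ ENNReal.ofReal (∑ j ∈ Finset.range (N+1) \ t n, A j k +
        ∑ j ∈ Finset.Ico (N+1) n, A j k) := ENNReal.ofReal_le_ofReal hreal
    _ ≤ ENNReal.ofReal (∑ j ∈ Finset.range (N+1) \ t n, A j k) +
        ENNReal.ofReal (∑ j ∈ Finset.Ico (N+1) n, A j k) := ENNReal.ofReal_add_le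
    _ ≤ (∑' j, Set.indicator {j | ¬ P j} g j) + ε := add_le_add hb1 hb2

theorem stmt18 (A : ℕ → ℕ → ℝ) (hnn : ∀ j k, 0 ≤ A j k)
    (hsym : ∀ j k, A j k = A k j) (hdiag : ∀ j, A j j = 0)
    (M : ℝ) (hM : ∀ k, (∑' j, ENNReal.ofReal (A j k)) ≤ ENNReal.ofReal M) :
    ∃ S : Set ℕ,
      (∀ k ∈ S, (∑' j : S, ENNReal.ofReal (A (j : ℕ) k)) ≤ ENNReal.ofReal (M/2)) ∧
      (∀ k ∉ S, (∑' j : {j : ℕ // j ∉ S}, ENNReal.ofReal (A (j : ℕ) k)) ≤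
        ENNReal.ofReal (M/2)) := by
  classical
  choose s hs1 hs2 using exists_minimizer A
  obtain ⟨U, hU⟩ := Ultrafilter.exists_le (Filter.atTop : Filter ℕ)
  set S : Set ℕ := {k | {n | k ∈ s n} ∈ U} with hSdef
  have htot : ∀ k, (∑' j, ENNReal.ofReal (A j k)) ≠ ⊤ :=
    fun k => ne_top_of_le_ne_top ENNReal.ofReal_ne_top (hM k)
  have hloc := fun n => minimizer_local A hsym hdiag (Finset.mem_powerset.mp (hs1 n)) (hs2 n)
  have hagree : ∀ N : ℕ, ∃ n, N < n ∧ ∀ j ≤ N, (j ∈ s n ↔ j ∈ S) := by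
    intro N
    have h1 : {n | N < n} ∈ U := hU (Filter.eventually_gt_atTop N)
    have h2 : ∀ j : ℕ, {n | j ∈ s n ↔ j ∈ S} ∈ U := by
      intro j
      by_cases hj : j ∈ S
      · have hj' : {n | j ∈ s n} ∈ U := hj
        exact Filter.mem_of_superset hj' (fun n hn => by simp only [Set.mem_setOf_eq] at hn ⊢; tauto)
      · have hj' : {n | j ∈ s n}ᶜ ∈ U := Ultrafilter.compl_mem_iff_notMem.mpr hj
        exact Filter.mem_of_superset hj' (fun n hn => by
          simp only [Set.mem_compl_iff, Set.mem_setOf_eq] at hn ⊢; tauto)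
    have h3 : ({n | N < n} ∩ ⋂ j ∈ Finset.range (N+1), {n | j ∈ s n ↔ j ∈ S}) ∈ U :=
      Filter.inter_mem h1 ((Filter.biInter_finset_mem _).mpr fun j _ => h2 j)
    obtain ⟨n, hn⟩ := Filter.nonempty_of_mem h3
    refine ⟨n, hn.1, fun j hj => ?_⟩
    have := hn.2
    simp only [Set.mem_iInter, Finset.mem_range, Set.mem_setOf_eq] at this
    exact this j (Nat.lt_succ_of_le hj)
  have hhalf : ENNReal.ofReal (M/2) = ENNReal.ofReal M / 2 := by
    rw [ENNReal.ofReal_div_of_pos (by norm_num : (0:ℝ) < 2)]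
    norm_num
  refine ⟨S, ?_, ?_⟩
  · intro k hkS
    have hb : (∑' j : {j // j ∈ S}, ENNReal.ofReal (A (j : ℕ) k))
        ≤ ∑' j : {j // ¬ j ∈ S}, ENNReal.ofReal (A (j : ℕ) k) := by
      refine half_bound A hnn k (htot k) (· ∈ S) s ?_ hkS
      intro N
      obtain ⟨n, hn1, hn2⟩ := hagree N
      exact ⟨n, hn1, hn2, Finset.mem_powerset.mp (hs1 n), (hloc n k).1⟩
    have hsum : (∑' j : S, ENNReal.ofReal (A (j : ℕ) k))
        + (∑' j : {j : ℕ // j ∉ S}, ENNReal.ofReal (A (j : ℕ) k))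
        = ∑' j, ENNReal.ofReal (A j k) :=
      Summable.tsum_add_tsum_compl (s := S) (f := fun j => ENNReal.ofReal (A j k)) ENNReal.summable ENNReal.summable
    have h2le : (∑' j : S, ENNReal.ofReal (A (j : ℕ) k)) * 2 ≤ ENNReal.ofReal M := by
      rw [mul_two]
      calc (∑' j : S, ENNReal.ofReal (A (j : ℕ) k)) + (∑' j : S, ENNReal.ofReal (A (j : ℕ) k))
          ≤ (∑' j : S, ENNReal.ofReal (A (j : ℕ) k))
            + (∑' j : {j : ℕ // j ∉ S}, ENNReal.ofReal (A (j : ℕ) k)) := add_le_add_right hb _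
        _ = ∑' j, ENNReal.ofReal (A j k) := hsum
        _ ≤ ENNReal.ofReal M := hM k
    rw [hhalf]
    exact (ENNReal.le_div_iff_mul_le (Or.inl two_ne_zero) (Or.inl ENNReal.ofNat_ne_top)).mpr h2le
  · intro k hkS
    have hb : (∑' j : {j // j ∉ S}, ENNReal.ofReal (A (j : ℕ) k))
        ≤ ∑' j : {j // ¬ j ∉ S}, ENNReal.ofReal (A (j : ℕ) k) := by
      refine half_bound A hnn k (htot k) (· ∉ S) (fun n => Finset.range n \ s n) ?_ hkS
      intro N
      obtain ⟨n, hn1, hn2⟩ := hagree N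
      refine ⟨n, hn1, fun j hj => ?_, Finset.sdiff_subset, fun hk => ?_⟩
      · rw [Finset.mem_sdiff, Finset.mem_range]
        constructor
        · rintro ⟨-, h⟩ hjS; exact h ((hn2 j hj).mpr hjS)
        · intro h; exact ⟨lt_of_le_of_lt hj hn1, fun hin => h ((hn2 j hj).mp hin)⟩
      · rw [Finset.sdiff_sdiff_eq_self (Finset.mem_powerset.mp (hs1 n))]
        exact (hloc n k).2 hk
    have hEq : (∑' j : {j // ¬ j ∉ S}, ENNReal.ofReal (A (j : ℕ) k))
        = ∑' j : S, ENNReal.ofReal (A (j : ℕ) k) :=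
      (Equiv.subtypeEquivRight (fun x => not_not)).tsum_eq
        (fun j : S => ENNReal.ofReal (A (j : ℕ) k))
    rw [hEq] at hb
    have hsum : (∑' j : S, ENNReal.ofReal (A (j : ℕ) k))
        + (∑' j : {j : ℕ // j ∉ S}, ENNReal.ofReal (A (j : ℕ) k))
        = ∑' j, ENNReal.ofReal (A j k) :=
      Summable.tsum_add_tsum_compl (s := S) (f := fun j => ENNReal.ofReal (A j k)) ENNReal.summable ENNReal.summable
    have h2le : (∑' j : {j : ℕ // j ∉ S}, ENNReal.ofReal (A (j : ℕ) k)) * 2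
        ≤ ENNReal.ofReal M := by
      rw [mul_two]
      calc (∑' j : {j : ℕ // j ∉ S}, ENNReal.ofReal (A (j : ℕ) k))
            + (∑' j : {j : ℕ // j ∉ S}, ENNReal.ofReal (A (j : ℕ) k))
          ≤ (∑' j : S, ENNReal.ofReal (A (j : ℕ) k))
            + (∑' j : {j : ℕ // j ∉ S}, ENNReal.ofReal (A (j : ℕ) k)) := add_le_add_left hb _
        _ = ∑' j, ENNReal.ofReal (A j k) := hsum
        _ ≤ ENNReal.ofReal M := hM k
    rw [hhalf]
    exact (ENNReal.le_div_iff_mul_le (Or.inl two_ne_zero) (Or.inl ENNReal.ofNat_ne_top)).mpr h2le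
end
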